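/- Let a be a strongly regular scale factor (extended to ℝ as an even function). The function t₀(τ,ρ) defined implicitly on D = {(τ,ρ) : τ > 0, 0 < ρ < 2ρ_{M_τ}} by ρ = ∫_{t₀}^τ a(t)/√(a(τ)²−a(t)²) dt is continuous on D, including at points where t₀ = 0. -/

import Mathlib

open Set MeasureTheory intervalIntegral

section Basics
variable {a : ℝ → ℝ}

lemma a_abs (heven : ∀ t, a (-t) = a t) : ∀ t, a t = a |t| := by
  intro t
  rcases le_or_gt 0 t with h | h
  · rw [abs_of_nonneg h]
  · rw [abs_of_neg h, ← heven]

lemma a_nonneg (ha0 : a 0 = 0) (heven : ∀ t, a (-t) = a t)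
    (hmono : StrictMonoOn a (Set.Ici 0)) : ∀ t, 0 ≤ a t := by
  intro t
  rw [a_abs heven t]
  rcases eq_or_lt_of_le (abs_nonneg t) with h | h
  · rw [← h, ha0]
  · exact le_of_lt (ha0 ▸ hmono (le_refl (0:ℝ) : (0:ℝ) ∈ Ici 0) (le_of_lt h) h)

lemma a_pos (ha0 : a 0 = 0) (heven : ∀ t, a (-t) = a t)
    (hmono : StrictMonoOn a (Set.Ici 0)) {t : ℝ} (ht : t ≠ 0) : 0 < a t := by
  rw [a_abs heven t]
  have h : 0 < |t| := abs_pos.2 ht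
  exact ha0 ▸ hmono (le_refl (0:ℝ)) (le_of_lt h) h

lemma a_cont (heven : ∀ t, a (-t) = a t) (hcont : ContinuousOn a (Set.Ici 0)) :
    Continuous a := by
  have : a = a ∘ abs := funext fun t => by rw [Function.comp_apply, ← a_abs heven t]
  rw [this]
  exact hcont.comp_continuous continuous_abs fun x => abs_nonneg x

lemma a_lt (heven : ∀ t, a (-t) = a t) (hmono : StrictMonoOn a (Set.Ici 0))
    {t τ : ℝ} (h : |t| < τ) : a t < a τ := by
  rw [a_abs heven t]
  exact hmono (abs_nonneg t) ((abs_nonneg t).trans h.le) h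

lemma a_le (heven : ∀ t, a (-t) = a t) (hmono : StrictMonoOn a (Set.Ici 0))
    {t τ : ℝ} (h0 : 0 ≤ τ) (h : |t| ≤ τ) : a t ≤ a τ := by
  rw [a_abs heven t]
  exact hmono.monotoneOn (abs_nonneg t) h0 h

lemma sq_lt (ha0 : a 0 = 0) (heven : ∀ t, a (-t) = a t)
    (hmono : StrictMonoOn a (Set.Ici 0)) {t τ : ℝ} (h : |t| < τ) :
    (a t)^2 < (a τ)^2 := by
  have h1 := a_lt heven hmono h
  have h2 := a_nonneg ha0 heven hmono t
  nlinarith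

end Basics

open Filter Topology

section Derivs
variable {a : ℝ → ℝ}

lemma a_hasDeriv (hsmooth : ContDiffOn ℝ 2 a (Set.Ioi 0)) {t : ℝ} (ht : 0 < t) :
    HasDerivAt a (deriv a t) t := by
  have hd : DifferentiableOn ℝ a (Set.Ioi 0) := hsmooth.differentiableOn (by norm_num)
  exact (hd.differentiableAt (Ioi_mem_nhds ht)).hasDerivAt

lemma deriv_a_nonneg (hmono : StrictMonoOn a (Set.Ici 0))
    (hsmooth : ContDiffOn ℝ 2 a (Set.Ioi 0)) {t : ℝ} (ht : 0 < t) :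
    0 ≤ deriv a t := by
  have hd := a_hasDeriv hsmooth ht
  have hs : Tendsto (slope a t) (𝓝[>] t) (𝓝 (deriv a t)) :=
    (hasDerivAt_iff_tendsto_slope.1 hd).mono_left
      (nhdsWithin_mono t fun y hy => ne_of_gt hy)
  refine ge_of_tendsto hs ?_
  filter_upwards [self_mem_nhdsWithin] with y hy
  have hy' : t < y := hy
  have h1 : a t ≤ a y := (hmono.monotoneOn) (le_of_lt ht) (le_of_lt (ht.trans hy')) hy'.le
  rw [slope_def_field]
  exact div_nonneg (by linarith) (by linarith)

lemma deriv_a_contDiff (hsmooth : ContDiffOn ℝ 2 a (Set.Ioi 0)) :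
    ContDiffOn ℝ 1 (deriv a) (Set.Ioi 0) :=
  hsmooth.deriv_of_isOpen isOpen_Ioi (by norm_num)

lemma deriv_a_hasDeriv (hsmooth : ContDiffOn ℝ 2 a (Set.Ioi 0)) {t : ℝ} (ht : 0 < t) :
    HasDerivAt (deriv a) (deriv (deriv a) t) t := by
  have hd : DifferentiableOn ℝ (deriv a) (Set.Ioi 0) :=
    (deriv_a_contDiff hsmooth).differentiableOn (by norm_num)
  exact (hd.differentiableAt (Ioi_mem_nhds ht)).hasDerivAt

lemma deriv2_zero (hmono : StrictMonoOn a (Set.Ici 0))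
    (hsmooth : ContDiffOn ℝ 2 a (Set.Ioi 0)) {t : ℝ} (ht : 0 < t)
    (h0 : deriv a t = 0) : deriv (deriv a) t = 0 := by
  have hmin : IsLocalMin (deriv a) t := by
    filter_upwards [Ioi_mem_nhds ht] with y hy
    rw [h0]
    exact deriv_a_nonneg hmono hsmooth hy
  exact hmin.deriv_eq_zero

lemma comb_nonneg (hmono : StrictMonoOn a (Set.Ici 0)) (hsmooth : ContDiffOn ℝ 2 a (Set.Ioi 0))
    {K : ℝ} (hKbound : ∀ t > (0:ℝ), -K ≤ a t * deriv (deriv a) t / (deriv a t) ^ 2)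
    {t : ℝ} (ht : 0 < t) :
    0 ≤ a t * deriv (deriv a) t + K * (deriv a t)^2 := by
  rcases eq_or_ne (deriv a t) 0 with h0 | h0
  · rw [h0, deriv2_zero hmono hsmooth ht h0]
    simp
  · have hsq : 0 < (deriv a t)^2 := by positivity
    have h2 := (le_div_iff₀ hsq).1 (hKbound t ht)
    nlinarith

/-- `a' · a^K` is monotone on (0,∞). -/
lemma h_mono (ha0 : a 0 = 0) (heven : ∀ t, a (-t) = a t)
    (hmono : StrictMonoOn a (Set.Ici 0)) (hsmooth : ContDiffOn ℝ 2 a (Set.Ioi 0))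
    {K : ℝ} (hK : 1 ≤ K)
    (hKbound : ∀ t > (0:ℝ), -K ≤ a t * deriv (deriv a) t / (deriv a t) ^ 2) :
    MonotoneOn (fun t => deriv a t * (a t) ^ K) (Set.Ioi 0) := by
  have hder : ∀ t ∈ Set.Ioi (0:ℝ), HasDerivAt (fun t => deriv a t * (a t) ^ K)
      (deriv (deriv a) t * (a t) ^ K + deriv a t * (deriv a t * K * (a t) ^ (K - 1))) t := by
    intro t ht
    exact (deriv_a_hasDeriv hsmooth ht).mul ((a_hasDeriv hsmooth ht).rpow_const (Or.inr hK))
  have hdiff : DifferentiableOn ℝ (fun t => deriv a t * (a t) ^ K) (Set.Ioi 0) :=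
    fun t ht => ((hder t ht).differentiableAt).differentiableWithinAt
  refine monotoneOn_of_deriv_nonneg (convex_Ioi 0) hdiff.continuousOn
    (by rwa [interior_Ioi]) ?_
  rw [interior_Ioi]
  intro t ht
  rw [(hder t ht).deriv]
  have hat : 0 < a t := a_pos ha0 heven hmono (ne_of_gt ht)
  have hcomb := comb_nonneg hmono hsmooth hKbound ht
  have hB : 0 ≤ (a t) ^ (K - 1) := Real.rpow_nonneg hat.le _
  have hKa : a t ^ K = (a t) ^ (K - 1) * a t := by
    rw [Real.rpow_sub hat, Real.rpow_one, div_mul_cancel₀ _ (ne_of_gt hat)]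
  rw [hKa]
  nlinarith [mul_nonneg hB hcomb]

/-- positive lower bound for the derivative on `[m, τs]`. -/
lemma deriv_lower (ha0 : a 0 = 0) (heven : ∀ t, a (-t) = a t)
    (hmono : StrictMonoOn a (Set.Ici 0)) (hcont : ContinuousOn a (Set.Ici 0))
    (hsmooth : ContDiffOn ℝ 2 a (Set.Ioi 0))
    {K : ℝ} (hK : 1 ≤ K)
    (hKbound : ∀ t > (0:ℝ), -K ≤ a t * deriv (deriv a) t / (deriv a t) ^ 2)
    {m τs : ℝ} (hm : 0 < m) (hmτ : m ≤ τs) :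
    ∃ δ > 0, ∀ t ∈ Set.Icc m τs, δ ≤ deriv a t := by
  obtain ⟨m', hm'mem, hm'⟩ := exists_hasDerivAt_eq_slope a (deriv a) (half_lt_self hm)
    ((a_cont heven hcont).continuousOn) (fun x hx => a_hasDeriv hsmooth ((half_pos hm).trans hx.1))
  have hm'pos : 0 < m' := (half_pos hm).trans hm'mem.1
  have hda : 0 < deriv a m' := by
    rw [hm']
    have h1 : a (m/2) < a m := hmono (le_of_lt (half_pos hm)) (le_of_lt hm) (half_lt_self hm)
    have h2 : (0:ℝ) < m - m/2 := by linarith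
    exact div_pos (by linarith) h2
  have hP : 0 < deriv a m' * (a m') ^ K :=
    mul_pos hda (Real.rpow_pos_of_pos (a_pos ha0 heven hmono (ne_of_gt hm'pos)) K)
  refine ⟨deriv a m' * (a m') ^ K / (a τs) ^ K,
    div_pos hP (Real.rpow_pos_of_pos (a_pos ha0 heven hmono (ne_of_gt (hm.trans_le hmτ))) K), ?_⟩
  intro t htmem
  have htpos : 0 < t := lt_of_lt_of_le hm htmem.1
  have hatpos : 0 < a t := a_pos ha0 heven hmono (ne_of_gt htpos)
  have hge : deriv a m' * (a m') ^ K ≤ deriv a t * (a t) ^ K :=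
    h_mono ha0 heven hmono hsmooth hK hKbound hm'pos htpos
      (le_of_lt (lt_of_lt_of_le hm'mem.2 htmem.1))
  have hK1 : (a t) ^ K ≤ (a τs) ^ K := by
    refine Real.rpow_le_rpow hatpos.le ?_ (by linarith)
    exact hmono.monotoneOn htpos.le (htpos.le.trans htmem.2) htmem.2
  have hKt : (0:ℝ) < (a t) ^ K := Real.rpow_pos_of_pos hatpos K
  have hKτ : (0:ℝ) < (a τs) ^ K := Real.rpow_pos_of_pos (a_pos ha0 heven hmono (ne_of_gt (hm.trans_le hmτ))) K
  calc deriv a m' * (a m') ^ K / (a τs) ^ K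
      ≤ deriv a m' * (a m') ^ K / (a t) ^ K := by
        exact div_le_div_of_nonneg_left hP.le hKt hK1
    _ ≤ deriv a t := by
        rw [div_le_iff₀ hKt]
        exact hge

end Derivs

section Tail
variable {a : ℝ → ℝ}

/-- Quadratic gap lower bound near the upper endpoint. -/
lemma gap_lower (ha0 : a 0 = 0) (heven : ∀ t, a (-t) = a t)
    (hmono : StrictMonoOn a (Set.Ici 0)) (hcont : ContinuousOn a (Set.Ici 0))
    (hsmooth : ContDiffOn ℝ 2 a (Set.Ioi 0))
    {K : ℝ} (hK : 1 ≤ K)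
    (hKbound : ∀ t > (0:ℝ), -K ≤ a t * deriv (deriv a) t / (deriv a t) ^ 2)
    {m τs : ℝ} (hm : 0 < m) (hmτ : m ≤ τs) :
    ∃ c > 0, ∀ t τ, m ≤ t → t ≤ τ → τ ≤ τs → c * (τ - t) ≤ (a τ)^2 - (a t)^2 := by
  obtain ⟨δ, hδ, hδle⟩ := deriv_lower ha0 heven hmono hcont hsmooth hK hKbound hm hmτ
  have ham : 0 < a m := a_pos ha0 heven hmono (ne_of_gt hm)
  refine ⟨2 * a m * δ, by positivity, ?_⟩
  have hgmono : MonotoneOn (fun x => (a x)^2 - 2 * a m * δ * x) (Set.Icc m τs) := by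
    have hder : ∀ x ∈ Set.Ioo m τs, HasDerivAt (fun x => (a x)^2 - 2 * a m * δ * x)
        (2 * a x ^ 1 * deriv a x - 2 * a m * δ * 1) x := by
      intro x hx
      exact ((a_hasDeriv hsmooth (hm.trans hx.1)).pow 2).sub
        ((hasDerivAt_id x).const_mul (2 * a m * δ))
    have hgc : Continuous (fun x => (a x)^2 - 2 * a m * δ * x) :=
      ((a_cont heven hcont).pow 2).sub (continuous_const.mul continuous_id)
    refine monotoneOn_of_deriv_nonneg (convex_Icc m τs) hgc.continuousOn
      (fun x hx => ?_) (fun x hx => ?_)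
    · rw [interior_Icc] at hx
      exact (hder x hx).differentiableAt.differentiableWithinAt
    · rw [interior_Icc] at hx
      rw [(hder x hx).deriv]
      have h1 : a m ≤ a x := hmono.monotoneOn hm.le (hm.le.trans hx.1.le) hx.1.le
      have h2 : δ ≤ deriv a x := hδle x ⟨hx.1.le, hx.2.le⟩
      have h3 : 0 < a x := lt_of_lt_of_le ham h1
      simp only [pow_one]
      nlinarith
  intro t τ hmt htτ hττs
  have h1 := hgmono ⟨hmt, htτ.trans hττs⟩ ⟨hmt.trans htτ, hττs⟩ htτ
  simp only at h1
  nlinarith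

variable {a : ℝ → ℝ}

/-- Tail estimate: the singular part of the integral is uniformly small. -/
lemma tail_bound (ha0 : a 0 = 0) (heven : ∀ t, a (-t) = a t)
    (hmono : StrictMonoOn a (Set.Ici 0)) (hcont : ContinuousOn a (Set.Ici 0))
    (hsmooth : ContDiffOn ℝ 2 a (Set.Ioi 0))
    {K : ℝ} (hK : 1 ≤ K)
    (hKbound : ∀ t > (0:ℝ), -K ≤ a t * deriv (deriv a) t / (deriv a t) ^ 2)
    {m τs : ℝ} (hm : 0 < m) (hmτ : m ≤ τs) :
    ∃ C > 0, ∀ x τ, m ≤ x → x ≤ τ → τ ≤ τs →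
      IntervalIntegrable (fun t => a t / Real.sqrt ((a τ)^2 - (a t)^2)) volume x τ →
      (∫ t in x..τ, a t / Real.sqrt ((a τ)^2 - (a t)^2)) ≤ C * Real.sqrt (τ - x) := by
  obtain ⟨c, hc, hgap⟩ := gap_lower ha0 heven hmono hcont hsmooth hK hKbound hm hmτ
  have hsc : 0 < Real.sqrt c := Real.sqrt_pos.2 hc
  have haτs : 0 < a τs := a_pos ha0 heven hmono (ne_of_gt (hm.trans_le hmτ))
  refine ⟨2 * (a τs / Real.sqrt c), by positivity, ?_⟩
  intro x τ hmx hmle hτle hInt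
  set B : ℝ → ℝ := fun t => a τs / Real.sqrt c * (τ - t) ^ (-(1/2) : ℝ) with hB
  have hBint : IntervalIntegrable B volume x τ := by
    have h0 : IntervalIntegrable (fun y : ℝ => y ^ (-(1/2) : ℝ)) volume (τ - x) (τ - τ) :=
      intervalIntegral.intervalIntegrable_rpow' (by norm_num)
    have h1 := (h0.comp_sub_left τ)
    simp only [sub_sub_cancel] at h1
    exact h1.const_mul _
  have hle : ∀ t ∈ Set.Icc x τ, a t / Real.sqrt ((a τ)^2 - (a t)^2) ≤ B t := by
    intro t ht
    rcases eq_or_lt_of_le ht.2 with rfl | htτ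
    · have h0 : Real.sqrt ((a t)^2 - (a t)^2) = 0 := by rw [sub_self, Real.sqrt_zero]
      simp [hB, h0, Real.zero_rpow (by norm_num : (-(1/2):ℝ) ≠ 0)]
    · have htpos : 0 < t := hm.trans_le (hmx.trans ht.1)
      have hgap' := hgap t τ (hmx.trans ht.1) ht.2 hτle
      have hτt : 0 < τ - t := by linarith
      have hs1 : Real.sqrt (c * (τ - t)) ≤ Real.sqrt ((a τ)^2 - (a t)^2) :=
        Real.sqrt_le_sqrt hgap'
      have hs0 : 0 < Real.sqrt (c * (τ - t)) := Real.sqrt_pos.2 (by positivity)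
      have hats : a t ≤ a τs := hmono.monotoneOn htpos.le (htpos.le.trans (ht.2.trans hτle))
        (ht.2.trans hτle)
      have key : a t / Real.sqrt ((a τ)^2 - (a t)^2) ≤ a τs / Real.sqrt (c * (τ - t)) :=
        div_le_div₀ haτs.le hats hs0 hs1
      have hrw : B t = a τs / (Real.sqrt c * Real.sqrt (τ - t)) := by
        rw [hB]
        simp only []
        rw [Real.rpow_neg hτt.le, ← Real.sqrt_eq_rpow]
        field_simp
      rw [hrw, ← Real.sqrt_mul hc.le]
      exact key
  have hmono2 := intervalIntegral.integral_mono_on hmle hInt hBint hle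
  have hBval : (∫ t in x..τ, B t) = 2 * (a τs / Real.sqrt c) * Real.sqrt (τ - x) := by
    have h1 : (∫ t in x..τ, B t)
        = a τs / Real.sqrt c * ∫ t in x..τ, (τ - t) ^ (-(1/2) : ℝ) := by
      rw [hB, ← intervalIntegral.integral_const_mul]
    have h2 : (∫ t in x..τ, (τ - t) ^ (-(1/2) : ℝ))
        = ∫ y in (τ - τ)..(τ - x), y ^ (-(1/2) : ℝ) :=
      intervalIntegral.integral_comp_sub_left (fun y => y ^ (-(1/2) : ℝ)) τ
    have h3 : (∫ y in (0:ℝ)..(τ - x), y ^ (-(1/2) : ℝ))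
        = ((τ - x) ^ ((-(1/2):ℝ) + 1) - (0:ℝ) ^ ((-(1/2):ℝ) + 1)) / ((-(1/2):ℝ) + 1) :=
      integral_rpow (Or.inl (by norm_num))
    have h4 : ((-(1/2):ℝ) + 1) = 1/2 := by norm_num
    rw [h1, h2, sub_self, h3, h4, Real.zero_rpow (by norm_num : (1/2:ℝ) ≠ 0),
      ← Real.sqrt_eq_rpow]
    ring
  calc (∫ t in x..τ, a t / Real.sqrt ((a τ)^2 - (a t)^2)) ≤ ∫ t in x..τ, B t := hmono2
    _ = 2 * (a τs / Real.sqrt c) * Real.sqrt (τ - x) := hBval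

end Tail

section Conv
variable {a : ℝ → ℝ}

lemma f_meas (heven : ∀ t, a (-t) = a t) (hcont : ContinuousOn a (Set.Ici 0)) (τ : ℝ) :
    Measurable (fun t => a t / Real.sqrt ((a τ)^2 - (a t)^2)) := by
  have hca := a_cont heven hcont
  exact hca.measurable.div
    (Real.continuous_sqrt.comp (continuous_const.sub (hca.pow 2))).measurable

/-- Continuity in `τ` of the regular part of the integral. -/
lemma compact_part (ha0 : a 0 = 0) (heven : ∀ t, a (-t) = a t)
    (hmono : StrictMonoOn a (Set.Ici 0)) (hcont : ContinuousOn a (Set.Ici 0))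
    {c m τ₀ : ℝ} (hm0 : 0 < m) (hcm : |c| ≤ m) (hmτ : m < τ₀) :
    ContinuousAt (fun τ => ∫ t in c..m, a t / Real.sqrt ((a τ)^2 - (a t)^2)) τ₀ := by
  have hca := a_cont heven hcont
  have hcm' : c ≤ m := (le_abs_self c).trans hcm
  have habs : ∀ t ∈ Set.Ioc c m, |t| ≤ m := by
    intro t ht
    rw [abs_le]
    constructor
    · calc -m ≤ -|c| := by linarith
        _ ≤ c := neg_abs_le c
        _ ≤ t := ht.1.le
    · exact ht.2
  set mid := (m + τ₀) / 2 with hmid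
  have hmmid : m < mid := by rw [hmid]; linarith
  have hmidτ : mid < τ₀ := by rw [hmid]; linarith
  set τs := τ₀ + 1 with hτs
  have hη : 0 < (a mid)^2 - (a m)^2 := by
    have := sq_lt ha0 heven hmono (show |m| < mid by rwa [abs_of_pos hm0])
    linarith
  set B : ℝ := a τs / Real.sqrt ((a mid)^2 - (a m)^2) with hBdef
  have hrw : (fun τ => ∫ t in c..m, a t / Real.sqrt ((a τ)^2 - (a t)^2))
      = fun τ => ∫ t, a t / Real.sqrt ((a τ)^2 - (a t)^2)
          ∂(volume.restrict (Set.Ioc c m)) :=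
    funext fun τ => intervalIntegral.integral_of_le hcm'
  rw [hrw]
  refine MeasureTheory.continuousAt_of_dominated (bound := fun _ => B) ?_ ?_ ?_ ?_
  · exact Filter.Eventually.of_forall fun τ => (f_meas heven hcont τ).aestronglyMeasurable
  · filter_upwards [Ioo_mem_nhds (a := mid) (b := τs) hmidτ (by rw [hτs]; linarith)] with τ hτ
    refine (MeasureTheory.ae_restrict_iff' measurableSet_Ioc).2 (Filter.Eventually.of_forall ?_)
    intro t ht
    have hts : |t| ≤ m := habs t ht
    have h1 : a t ≤ a τs := a_le heven hmono (by rw [hτs]; linarith)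
      (by rw [hτs]; linarith [hts, hmτ])
    have h2 : (a mid)^2 - (a m)^2 ≤ (a τ)^2 - (a t)^2 := by
      have ha1 : a mid ≤ a τ := hmono.monotoneOn (Set.mem_Ici.2 (by linarith))
        (Set.mem_Ici.2 (by linarith [hτ.1])) hτ.1.le
      have ha2 : a t ≤ a m := a_le heven hmono hm0.le hts
      have ha3 : 0 ≤ a t := a_nonneg ha0 heven hmono t
      have ha4 : 0 ≤ a mid := a_nonneg ha0 heven hmono mid
      nlinarith
    have h3 : Real.sqrt ((a mid)^2 - (a m)^2) ≤ Real.sqrt ((a τ)^2 - (a t)^2) :=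
      Real.sqrt_le_sqrt h2
    have h4 : 0 < Real.sqrt ((a mid)^2 - (a m)^2) := Real.sqrt_pos.2 hη
    have h5 : 0 ≤ a t := a_nonneg ha0 heven hmono t
    rw [Real.norm_eq_abs, abs_of_nonneg (div_nonneg h5 (Real.sqrt_nonneg _))]
    exact div_le_div₀ ((h5.trans h1).trans le_rfl) h1 h4 h3
  · rw [MeasureTheory.integrable_const_iff]
    right
    exact isFiniteMeasure_restrict.2 measure_Ioc_lt_top.ne
  · refine (MeasureTheory.ae_restrict_iff' measurableSet_Ioc).2 (Filter.Eventually.of_forall ?_)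
    intro t ht
    have hts : |t| < τ₀ := lt_of_le_of_lt (habs t ht) hmτ
    have hd : 0 < (a τ₀)^2 - (a t)^2 := by linarith [sq_lt ha0 heven hmono hts]
    have hsq : ContinuousAt (fun τ => Real.sqrt ((a τ)^2 - (a t)^2)) τ₀ :=
      Real.continuous_sqrt.continuousAt.comp
        (((hca.pow 2).continuousAt).sub continuousAt_const)
    exact continuousAt_const.div hsq (ne_of_gt (Real.sqrt_pos.2 hd))


set_option maxHeartbeats 1000000 in
/-- Main convergence lemma for the full singular integral. -/
lemma conv_main (ha0 : a 0 = 0) (heven : ∀ t, a (-t) = a t)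
    (hmono : StrictMonoOn a (Set.Ici 0)) (hcont : ContinuousOn a (Set.Ici 0))
    (hsmooth : ContDiffOn ℝ 2 a (Set.Ioi 0))
    {K : ℝ} (hK : 1 ≤ K)
    (hKbound : ∀ t > (0:ℝ), -K ≤ a t * deriv (deriv a) t / (deriv a t) ^ 2)
    {τ₀ c : ℝ} (hτ₀ : 0 < τ₀) (hc : |c| < τ₀)
    (hInt0 : IntervalIntegrable (fun t => a t / Real.sqrt ((a τ₀)^2 - (a t)^2)) volume c τ₀)
    {ε : ℝ} (hε : 0 < ε) :
    ∃ δ > 0, ∀ τ, |τ - τ₀| < δ →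
      IntervalIntegrable (fun t => a t / Real.sqrt ((a τ)^2 - (a t)^2)) volume c τ →
      |(∫ t in c..τ, a t / Real.sqrt ((a τ)^2 - (a t)^2))
        - ∫ t in c..τ₀, a t / Real.sqrt ((a τ₀)^2 - (a t)^2)| < ε := by
  set m₀ : ℝ := (|c| + τ₀) / 2 with hm₀def
  have hm₀pos : 0 < m₀ := by positivity
  have hcm₀ : |c| < m₀ := by rw [hm₀def]; linarith
  have hm₀τ : m₀ < τ₀ := by rw [hm₀def]; linarith
  set τs : ℝ := τ₀ + 1 with hτsdef
  obtain ⟨C, hC, htail⟩ := tail_bound ha0 heven hmono hcont hsmooth hK hKbound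
    hm₀pos (show m₀ ≤ τs by rw [hτsdef]; linarith)
  set d : ℝ := min (min (τ₀ - m₀) 1) (ε^2 / (19 * C^2)) with hddef
  have hd0 : 0 < d := by
    refine lt_min (lt_min (by linarith) one_pos) (by positivity)
  have hd1 : d ≤ τ₀ - m₀ := (min_le_left _ _).trans (min_le_left _ _)
  have hd2 : d ≤ 1 := (min_le_left _ _).trans (min_le_right _ _)
  have hd3 : d ≤ ε^2 / (19 * C^2) := min_le_right _ _
  set m : ℝ := τ₀ - d with hmdef
  have hmm₀ : m₀ ≤ m := by rw [hmdef]; linarith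
  have hm0 : 0 < m := lt_of_lt_of_le hm₀pos hmm₀
  have hmτ₀ : m < τ₀ := by rw [hmdef]; linarith
  have hcmlt : |c| < m := lt_of_lt_of_le hcm₀ hmm₀
  have hclem : c ≤ m := (le_abs_self c).trans hcmlt.le
  -- tail estimate target
  have htail_small : C * Real.sqrt (2 * d) < ε / 3 := by
    have h1 : Real.sqrt (2 * d) ≤ Real.sqrt (2 * (ε^2 / (19 * C^2))) :=
      Real.sqrt_le_sqrt (by linarith)
    have h2 : 2 * (ε^2 / (19 * C^2)) = (ε / C)^2 * (2/19) := by ring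
    have h3 : Real.sqrt ((ε / C)^2 * (2/19)) = (ε / C) * Real.sqrt (2/19) := by
      rw [Real.sqrt_mul (by positivity), Real.sqrt_sq (by positivity)]
    have h4 : Real.sqrt (2/19) < 1/3 := by
      rw [show (1:ℝ)/3 = Real.sqrt ((1/3)^2) by rw [Real.sqrt_sq (by norm_num)]]
      exact Real.sqrt_lt_sqrt (by norm_num) (by norm_num)
    calc C * Real.sqrt (2 * d) ≤ C * ((ε / C) * Real.sqrt (2/19)) := by
          rw [← h3, ← h2]; exact mul_le_mul_of_nonneg_left h1 hC.le
      _ = ε * Real.sqrt (2/19) := by field_simp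
      _ < ε * (1/3) := by exact mul_lt_mul_of_pos_left h4 hε
      _ = ε / 3 := by ring
  -- compact part
  have hcompact := compact_part ha0 heven hmono hcont hm0 hcmlt.le hmτ₀
  rw [Metric.continuousAt_iff] at hcompact
  obtain ⟨δ₂, hδ₂, hφ⟩ := hcompact (ε/3) (by linarith)
  refine ⟨min d δ₂, lt_min hd0 hδ₂, ?_⟩
  intro τ hτd hIntτ
  have hτd1 : |τ - τ₀| < d := lt_of_lt_of_le hτd (min_le_left _ _)
  have hτd2 : |τ - τ₀| < δ₂ := lt_of_lt_of_le hτd (min_le_right _ _)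
  rw [abs_lt] at hτd1
  have hmτ : m < τ := by rw [hmdef]; linarith
  have hττs : τ ≤ τs := by rw [hτsdef]; linarith
  -- subset facts
  have hsub1 : Set.uIcc c m ⊆ Set.uIcc c τ := by
    rw [Set.uIcc_of_le hclem, Set.uIcc_of_le (hclem.trans hmτ.le)]
    exact Set.Icc_subset_Icc le_rfl hmτ.le
  have hsub2 : Set.uIcc m τ ⊆ Set.uIcc c τ := by
    rw [Set.uIcc_of_le hmτ.le, Set.uIcc_of_le (hclem.trans hmτ.le)]
    exact Set.Icc_subset_Icc hclem le_rfl
  have hsub3 : Set.uIcc c m ⊆ Set.uIcc c τ₀ := by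
    rw [Set.uIcc_of_le hclem, Set.uIcc_of_le (hclem.trans hmτ₀.le)]
    exact Set.Icc_subset_Icc le_rfl hmτ₀.le
  have hsub4 : Set.uIcc m τ₀ ⊆ Set.uIcc c τ₀ := by
    rw [Set.uIcc_of_le hmτ₀.le, Set.uIcc_of_le (hclem.trans hmτ₀.le)]
    exact Set.Icc_subset_Icc hclem le_rfl
  -- decompositions
  have hdecτ : (∫ t in c..m, a t / Real.sqrt ((a τ)^2 - (a t)^2))
      + (∫ t in m..τ, a t / Real.sqrt ((a τ)^2 - (a t)^2))
      = ∫ t in c..τ, a t / Real.sqrt ((a τ)^2 - (a t)^2) :=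
    intervalIntegral.integral_add_adjacent_intervals (hIntτ.mono_set hsub1)
      (hIntτ.mono_set hsub2)
  have hdecτ₀ : (∫ t in c..m, a t / Real.sqrt ((a τ₀)^2 - (a t)^2))
      + (∫ t in m..τ₀, a t / Real.sqrt ((a τ₀)^2 - (a t)^2))
      = ∫ t in c..τ₀, a t / Real.sqrt ((a τ₀)^2 - (a t)^2) :=
    intervalIntegral.integral_add_adjacent_intervals (hInt0.mono_set hsub3)
      (hInt0.mono_set hsub4)
  -- tail bounds
  have ht1 : (∫ t in m..τ, a t / Real.sqrt ((a τ)^2 - (a t)^2)) ≤ C * Real.sqrt (τ - m) :=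
    htail m τ hmm₀ hmτ.le hττs (hIntτ.mono_set hsub2)
  have ht2 : (∫ t in m..τ₀, a t / Real.sqrt ((a τ₀)^2 - (a t)^2)) ≤ C * Real.sqrt (τ₀ - m) :=
    htail m τ₀ hmm₀ hmτ₀.le (by rw [hτsdef]; linarith) (hInt0.mono_set hsub4)
  have hsm1 : C * Real.sqrt (τ - m) < ε / 3 := by
    refine lt_of_le_of_lt ?_ htail_small
    refine mul_le_mul_of_nonneg_left (Real.sqrt_le_sqrt ?_) hC.le
    rw [hmdef]; linarith
  have hsm2 : C * Real.sqrt (τ₀ - m) < ε / 3 := by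
    refine lt_of_le_of_lt ?_ htail_small
    refine mul_le_mul_of_nonneg_left (Real.sqrt_le_sqrt ?_) hC.le
    rw [hmdef]; linarith
  have hnn1 : 0 ≤ ∫ t in m..τ, a t / Real.sqrt ((a τ)^2 - (a t)^2) :=
    intervalIntegral.integral_nonneg hmτ.le
      (fun u _ => div_nonneg (a_nonneg ha0 heven hmono u) (Real.sqrt_nonneg _))
  have hnn2 : 0 ≤ ∫ t in m..τ₀, a t / Real.sqrt ((a τ₀)^2 - (a t)^2) :=
    intervalIntegral.integral_nonneg hmτ₀.le
      (fun u _ => div_nonneg (a_nonneg ha0 heven hmono u) (Real.sqrt_nonneg _))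
  have hφτ := hφ (show dist τ τ₀ < δ₂ by rwa [Real.dist_eq])
  rw [Real.dist_eq] at hφτ
  rw [abs_lt] at hφτ ⊢
  constructor <;> [nlinarith [hφτ.1, hφτ.2]; nlinarith [hφτ.1, hφτ.2]]

end Conv

section Final
variable {a : ℝ → ℝ}

/-- Integrability on compact subintervals away from the singularity. -/
lemma int_compact (ha0 : a 0 = 0) (heven : ∀ t, a (-t) = a t)
    (hmono : StrictMonoOn a (Set.Ici 0)) (hcont : ContinuousOn a (Set.Ici 0))
    {τ x y : ℝ} (hx : |x| < τ) (hy : |y| < τ) :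
    IntervalIntegrable (fun t => a t / Real.sqrt ((a τ)^2 - (a t)^2)) volume x y := by
  have hca := a_cont heven hcont
  refine ContinuousOn.intervalIntegrable ?_
  have habs : ∀ t ∈ Set.uIcc x y, |t| < τ := by
    intro t ht
    rw [Set.uIcc_eq_union] at ht
    rw [abs_lt] at hx hy ⊢
    rcases ht with ht | ht <;> rw [Set.mem_Icc] at ht <;> constructor <;> linarith [ht.1, ht.2]
  refine ContinuousOn.div hca.continuousOn
    ((Real.continuous_sqrt.comp (continuous_const.sub (hca.pow 2))).continuousOn) ?_
  intro t ht
  have := sq_lt ha0 heven hmono (habs t ht)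
  exact ne_of_gt (Real.sqrt_pos.2 (by linarith))

/-- Positivity of the integral over a nondegenerate subinterval. -/
lemma int_pos (ha0 : a 0 = 0) (heven : ∀ t, a (-t) = a t)
    (hmono : StrictMonoOn a (Set.Ici 0)) (hcont : ContinuousOn a (Set.Ici 0))
    {τ x y : ℝ} (hx : |x| < τ) (hy : |y| < τ) (hxy : x < y) :
    0 < ∫ t in x..y, a t / Real.sqrt ((a τ)^2 - (a t)^2) := by
  have hposon : ∀ u v : ℝ, |u| < τ → |v| < τ → u < v → (∀ t ∈ Set.Ioo u v, t ≠ 0) →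
      0 < ∫ t in u..v, a t / Real.sqrt ((a τ)^2 - (a t)^2) := by
    intro u v hu hv huv hne
    refine intervalIntegral.intervalIntegral_pos_of_pos_on
      (int_compact ha0 heven hmono hcont hu hv) ?_ huv
    intro t ht
    have htabs : |t| < τ := by
      rw [abs_lt] at hu hv ⊢
      constructor <;> linarith [ht.1, ht.2]
    have hd : 0 < (a τ)^2 - (a t)^2 := by linarith [sq_lt ha0 heven hmono htabs]
    exact div_pos (a_pos ha0 heven hmono (hne t ht)) (Real.sqrt_pos.2 hd)
  by_cases hy0 : 0 < y
  · set x' := max x (y/2) with hx'def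
    have hxx' : x ≤ x' := le_max_left _ _
    have hx'y : x' < y := max_lt hxy (by linarith)
    have hx'abs : |x'| < τ := by
      rw [abs_lt] at hx hy ⊢
      constructor
      · linarith [le_max_left x (y/2)]
      · linarith [hx'y]
    have h1 : 0 ≤ ∫ t in x..x', a t / Real.sqrt ((a τ)^2 - (a t)^2) :=
      intervalIntegral.integral_nonneg hxx'
        (fun u _ => div_nonneg (a_nonneg ha0 heven hmono u) (Real.sqrt_nonneg _))
    have h2 : 0 < ∫ t in x'..y, a t / Real.sqrt ((a τ)^2 - (a t)^2) := by
      refine hposon x' y hx'abs hy hx'y ?_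
      intro t ht
      have : y/2 ≤ x' := le_max_right _ _
      have : 0 < t := by linarith [ht.1]
      exact ne_of_gt this
    have hdec := intervalIntegral.integral_add_adjacent_intervals
      (int_compact ha0 heven hmono hcont hx hx'abs)
      (int_compact ha0 heven hmono hcont hx'abs hy)
      (f := fun t => a t / Real.sqrt ((a τ)^2 - (a t)^2)) (μ := volume)
    rw [← hdec]
    linarith
  · refine hposon x y hx hy hxy ?_
    intro t ht
    have : t < 0 := by push_neg at hy0; linarith [ht.2]
    exact ne_of_lt this

end Final

set_option maxHeartbeats 1000000 in
/-- The implicitly defined cosmological time function `t₀(τ, ρ)` is continuous on the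
extended Fermi domain `D`, including where `t₀ = 0`. -/
theorem t0_continuous (a : ℝ → ℝ)
    (ha0 : a 0 = 0)
    (heven : ∀ t, a (-t) = a t)
    (hmono : StrictMonoOn a (Set.Ici 0))
    (hcont : ContinuousOn a (Set.Ici 0))
    (hsmooth : ContDiffOn ℝ 2 a (Set.Ioi 0))
    (hreg : ∀ t > (0:ℝ), a t * deriv (deriv a) t / (deriv a t) ^ 2 ≤ 1)
    (K : ℝ) (hK : 1 ≤ K)
    (hKbound : ∀ t > (0:ℝ), -K ≤ a t * deriv (deriv a) t / (deriv a t) ^ 2)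
    (ρM : ℝ → ℝ)
    (hρM : ∀ τ, ρM τ = ∫ t in (0:ℝ)..τ, a t / Real.sqrt ((a τ) ^ 2 - (a t) ^ 2))
    (D : Set (ℝ × ℝ))
    (hD : D = {p : ℝ × ℝ | 0 < p.1 ∧ 0 < p.2 ∧ p.2 < 2 * ρM p.1})
    (T : ℝ × ℝ → ℝ)
    (hT : ∀ p ∈ D, T p ∈ Set.Ioo (-p.1) p.1 ∧
      p.2 = ∫ t in (T p)..p.1, a t / Real.sqrt ((a p.1) ^ 2 - (a t) ^ 2)) :
    ContinuousOn T D := by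
  intro p hp
  rw [Metric.continuousWithinAt_iff]
  intro ε hε
  obtain ⟨hTmem, hTeq⟩ := hT p hp
  have hpD : 0 < p.1 ∧ 0 < p.2 ∧ p.2 < 2 * ρM p.1 := by rw [hD] at hp; exact hp
  set τ₀ := p.1 with hτ₀def
  set ρ₀ := p.2 with hρ₀def
  set t₀ := T p with ht₀def
  have hτ₀pos : 0 < τ₀ := hpD.1
  have hρ₀pos : 0 < ρ₀ := hpD.2.1
  have ht₀mem : -τ₀ < t₀ ∧ t₀ < τ₀ := ⟨hTmem.1, hTmem.2⟩
  have ht₀abs : |t₀| < τ₀ := abs_lt.2 ht₀mem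
  -- integrability at the base point
  have hInt0 : IntervalIntegrable (fun t => a t / Real.sqrt ((a τ₀)^2 - (a t)^2))
      volume t₀ τ₀ := by
    by_contra h
    rw [intervalIntegral.integral_undef h] at hTeq
    exact absurd hTeq (ne_of_gt hρ₀pos)
  -- the two test points
  set ε' : ℝ := min ε (min (τ₀ - t₀) (t₀ + τ₀)) / 2 with hε'def
  have hε'pos : 0 < ε' := by
    rw [hε'def]
    have h1 : 0 < τ₀ - t₀ := by linarith [ht₀mem.2]
    have h2 : 0 < t₀ + τ₀ := by linarith [ht₀mem.1]
    positivity
  have hε'le : ε' ≤ ε / 2 := by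
    rw [hε'def]
    have := min_le_left ε (min (τ₀ - t₀) (t₀ + τ₀))
    linarith
  set c₂ : ℝ := t₀ + ε' with hc₂def
  set c₁ : ℝ := t₀ - ε' with hc₁def
  have hc₂lt : c₂ < τ₀ := by
    have h1 : ε' ≤ (τ₀ - t₀) / 2 := by
      rw [hε'def]
      have := (min_le_right ε (min (τ₀ - t₀) (t₀ + τ₀))).trans
        (min_le_left (τ₀ - t₀) (t₀ + τ₀))
      linarith
    rw [hc₂def]; linarith [ht₀mem.2]
  have hc₁gt : -τ₀ < c₁ := by
    have h1 : ε' ≤ (t₀ + τ₀) / 2 := by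
      rw [hε'def]
      have := (min_le_right ε (min (τ₀ - t₀) (t₀ + τ₀))).trans
        (min_le_right (τ₀ - t₀) (t₀ + τ₀))
      linarith
    rw [hc₁def]; linarith [ht₀mem.1]
  have hc₂abs : |c₂| < τ₀ := abs_lt.2 ⟨by rw [hc₂def]; linarith [ht₀mem.1], hc₂lt⟩
  have hc₁abs : |c₁| < τ₀ := abs_lt.2 ⟨hc₁gt, by rw [hc₁def]; linarith [ht₀mem.2]⟩
  have ht₀c₂ : t₀ < c₂ := by rw [hc₂def]; linarith
  have hc₁t₀ : c₁ < t₀ := by rw [hc₁def]; linarith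
  -- integrability from the test points to τ₀
  have hsub₂ : Set.uIcc c₂ τ₀ ⊆ Set.uIcc t₀ τ₀ := by
    rw [Set.uIcc_of_le hc₂lt.le, Set.uIcc_of_le ht₀mem.2.le]
    exact Set.Icc_subset_Icc ht₀c₂.le le_rfl
  have hInt₂ : IntervalIntegrable (fun t => a t / Real.sqrt ((a τ₀)^2 - (a t)^2))
      volume c₂ τ₀ := hInt0.mono_set hsub₂
  have hInt₁ : IntervalIntegrable (fun t => a t / Real.sqrt ((a τ₀)^2 - (a t)^2))
      volume c₁ τ₀ :=
    (int_compact ha0 heven hmono hcont hc₁abs ht₀abs).trans hInt0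
  -- the strict gaps
  have hgap₂ : 0 < ρ₀ - ∫ t in c₂..τ₀, a t / Real.sqrt ((a τ₀)^2 - (a t)^2) := by
    have hdec := intervalIntegral.integral_add_adjacent_intervals
      (int_compact ha0 heven hmono hcont ht₀abs hc₂abs) hInt₂
      (f := fun t => a t / Real.sqrt ((a τ₀)^2 - (a t)^2)) (μ := volume)
    have hpos := int_pos ha0 heven hmono hcont ht₀abs hc₂abs ht₀c₂
    have : ρ₀ = (∫ t in t₀..c₂, a t / Real.sqrt ((a τ₀)^2 - (a t)^2))
        + ∫ t in c₂..τ₀, a t / Real.sqrt ((a τ₀)^2 - (a t)^2) := by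
      rw [hdec]
      simpa using hTeq
    linarith
  have hgap₁ : 0 < (∫ t in c₁..τ₀, a t / Real.sqrt ((a τ₀)^2 - (a t)^2)) - ρ₀ := by
    have hdec := intervalIntegral.integral_add_adjacent_intervals
      (int_compact ha0 heven hmono hcont hc₁abs ht₀abs) hInt0
      (f := fun t => a t / Real.sqrt ((a τ₀)^2 - (a t)^2)) (μ := volume)
    have hpos := int_pos ha0 heven hmono hcont hc₁abs ht₀abs hc₁t₀
    have : (∫ t in c₁..τ₀, a t / Real.sqrt ((a τ₀)^2 - (a t)^2))
        = (∫ t in c₁..t₀, a t / Real.sqrt ((a τ₀)^2 - (a t)^2)) + ρ₀ := by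
      rw [← hdec]
      simpa using hTeq.symm ▸ rfl
    linarith
  set r₂ : ℝ := ρ₀ - ∫ t in c₂..τ₀, a t / Real.sqrt ((a τ₀)^2 - (a t)^2) with hr₂def
  set r₁ : ℝ := (∫ t in c₁..τ₀, a t / Real.sqrt ((a τ₀)^2 - (a t)^2)) - ρ₀ with hr₁def
  -- convergence lemmas at the two test points
  obtain ⟨δ₂, hδ₂pos, hconv₂⟩ := conv_main ha0 heven hmono hcont hsmooth hK hKbound
    hτ₀pos hc₂abs hInt₂ (half_pos hgap₂)
  obtain ⟨δ₁, hδ₁pos, hconv₁⟩ := conv_main ha0 heven hmono hcont hsmooth hK hKbound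
    hτ₀pos hc₁abs hInt₁ (half_pos hgap₁)
  refine ⟨min (min δ₁ δ₂) (min (min (r₁/2) (r₂/2)) (min (τ₀ - |c₁|) (τ₀ - |c₂|))), ?_, ?_⟩
  · have h1 : 0 < τ₀ - |c₁| := by linarith
    have h2 : 0 < τ₀ - |c₂| := by linarith
    positivity
  intro q hq hdist
  set δ := min (min δ₁ δ₂) (min (min (r₁/2) (r₂/2)) (min (τ₀ - |c₁|) (τ₀ - |c₂|))) with hδdef
  have hq1 : |q.1 - τ₀| < δ := by
    rw [← Real.dist_eq]
    exact lt_of_le_of_lt (le_trans (le_max_left _ _) (le_of_eq (Prod.dist_eq).symm)) hdist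
  have hq2 : |q.2 - ρ₀| < δ := by
    rw [← Real.dist_eq]
    exact lt_of_le_of_lt (le_trans (le_max_right _ _) (le_of_eq (Prod.dist_eq).symm)) hdist
  have hδδ₁ : δ ≤ δ₁ := (min_le_left _ _).trans (min_le_left _ _)
  have hδδ₂ : δ ≤ δ₂ := (min_le_left _ _).trans (min_le_right _ _)
  have hδr₁ : δ ≤ r₁/2 := (min_le_right _ _).trans ((min_le_left _ _).trans (min_le_left _ _))
  have hδr₂ : δ ≤ r₂/2 := (min_le_right _ _).trans ((min_le_left _ _).trans (min_le_right _ _))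
  have hδc₁ : δ ≤ τ₀ - |c₁| := (min_le_right _ _).trans ((min_le_right _ _).trans (min_le_left _ _))
  have hδc₂ : δ ≤ τ₀ - |c₂| := (min_le_right _ _).trans ((min_le_right _ _).trans (min_le_right _ _))
  have hqD : 0 < q.1 ∧ 0 < q.2 ∧ q.2 < 2 * ρM q.1 := by rw [hD] at hq; exact hq
  obtain ⟨hTqmem, hTqeq⟩ := hT q hq
  have hTqabs : |T q| < q.1 := abs_lt.2 ⟨hTqmem.1, hTqmem.2⟩
  have hIntTq : IntervalIntegrable (fun t => a t / Real.sqrt ((a q.1)^2 - (a t)^2))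
      volume (T q) q.1 := by
    by_contra h
    rw [intervalIntegral.integral_undef h] at hTqeq
    exact absurd hTqeq (ne_of_gt hqD.2.1)
  have hq1abs := abs_lt.1 hq1
  have hc₂q : |c₂| < q.1 := by linarith
  have hc₁q : |c₁| < q.1 := by linarith
  have hG₀₂ : (∫ t in c₂..τ₀, a t / Real.sqrt ((a τ₀)^2 - (a t)^2)) = ρ₀ - r₂ := by
    rw [hr₂def]; ring
  have hG₀₁ : (∫ t in c₁..τ₀, a t / Real.sqrt ((a τ₀)^2 - (a t)^2)) = ρ₀ + r₁ := by
    rw [hr₁def]; ring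
  have hq2abs := abs_lt.1 hq2
  -- Claim A : T q < c₂
  have hclaimA : T q < c₂ := by
    by_contra hA
    push_neg at hA
    have hIc : IntervalIntegrable (fun t => a t / Real.sqrt ((a q.1)^2 - (a t)^2))
        volume c₂ (T q) := int_compact ha0 heven hmono hcont hc₂q hTqabs
    have hIcτ : IntervalIntegrable (fun t => a t / Real.sqrt ((a q.1)^2 - (a t)^2))
        volume c₂ q.1 := hIc.trans hIntTq
    have hdecq := intervalIntegral.integral_add_adjacent_intervals hIc hIntTq
      (f := fun t => a t / Real.sqrt ((a q.1)^2 - (a t)^2)) (μ := volume)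
    have hnn : 0 ≤ ∫ t in c₂..(T q), a t / Real.sqrt ((a q.1)^2 - (a t)^2) :=
      intervalIntegral.integral_nonneg hA
        (fun u _ => div_nonneg (a_nonneg ha0 heven hmono u) (Real.sqrt_nonneg _))
    have hGge : q.2 ≤ ∫ t in c₂..q.1, a t / Real.sqrt ((a q.1)^2 - (a t)^2) := by
      rw [← hdecq]
      have : q.2 = ∫ t in (T q)..q.1, a t / Real.sqrt ((a q.1)^2 - (a t)^2) := by
        simpa using hTqeq
      linarith [this]
    have hcv := hconv₂ q.1 (lt_of_lt_of_le hq1 hδδ₂) hIcτ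
    rw [abs_lt] at hcv
    rw [hG₀₂] at hcv
    linarith [hcv.1, hcv.2, hq2abs.1, hq2abs.2]
  -- Claim B : c₁ < T q
  have hclaimB : c₁ < T q := by
    by_contra hB
    push_neg at hB
    have hsubB : Set.uIcc c₁ q.1 ⊆ Set.uIcc (T q) q.1 := by
      rw [Set.uIcc_of_le (by linarith [le_abs_self c₁, hc₁q] : c₁ ≤ q.1), Set.uIcc_of_le hTqmem.2.le]
      exact Set.Icc_subset_Icc hB le_rfl
    have hIcτ : IntervalIntegrable (fun t => a t / Real.sqrt ((a q.1)^2 - (a t)^2))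
        volume c₁ q.1 := hIntTq.mono_set hsubB
    have hIc : IntervalIntegrable (fun t => a t / Real.sqrt ((a q.1)^2 - (a t)^2))
        volume (T q) c₁ := int_compact ha0 heven hmono hcont hTqabs hc₁q
    have hdecq := intervalIntegral.integral_add_adjacent_intervals hIc hIcτ
      (f := fun t => a t / Real.sqrt ((a q.1)^2 - (a t)^2)) (μ := volume)
    have hnn : 0 ≤ ∫ t in (T q)..c₁, a t / Real.sqrt ((a q.1)^2 - (a t)^2) :=
      intervalIntegral.integral_nonneg hB
        (fun u _ => div_nonneg (a_nonneg ha0 heven hmono u) (Real.sqrt_nonneg _))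
    have hGle : (∫ t in c₁..q.1, a t / Real.sqrt ((a q.1)^2 - (a t)^2)) ≤ q.2 := by
      have : q.2 = ∫ t in (T q)..q.1, a t / Real.sqrt ((a q.1)^2 - (a t)^2) := by
        simpa using hTqeq
      linarith [hdecq, this]
    have hcv := hconv₁ q.1 (lt_of_lt_of_le hq1 hδδ₁) hIcτ
    rw [abs_lt] at hcv
    rw [hG₀₁] at hcv
    linarith [hcv.1, hcv.2, hq2abs.1, hq2abs.2]
  rw [Real.dist_eq]
  have : |T q - t₀| < ε' := by
    rw [abs_lt]
    constructor
    · rw [hc₁def] at hclaimB; linarith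
    · rw [hc₂def] at hclaimA; linarith
  linarith [hε'le, hε, this]
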